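/- Let G be a finite group of order d, and let χ: G → ℚ be a class function such that χ(g) = χ(g^a) for all g in G and all a coprime to d. Then χ is a ℚ-linear combination of characters Ind_H^G(1) where H ranges over cyclic subgroups of G. -/

import Mathlib

/-- The character of `Ind_H^G 1` at `g`: the number of fixed points of `g` on `G ⧸ H`,
computed as `#{x : x⁻¹ g x ∈ H} / |H|`. -/
noncomputable def indTrivChar (G : Type*) [Group G] (H : Subgroup G) (g : G) : ℚ :=
  (Nat.card {x : G // x⁻¹ * g * x ∈ H} : ℚ) / (Nat.card H : ℚ)

section ArtinAux

set_option linter.unusedSectionVars false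

variable {G : Type*} [Group G] [Fintype G]

private lemma zpowers_isCyclic' (g : G) : IsCyclic (Subgroup.zpowers g) := by
  refine ⟨⟨⟨g, Subgroup.mem_zpowers g⟩, ?_⟩⟩
  rintro ⟨x, k, rfl⟩
  exact ⟨k, by ext; simp⟩

private lemma pow_mem_iff_art (H : Subgroup G) (y : G) {a : ℕ}
    (ha : Nat.Coprime a (Fintype.card G)) : y ^ a ∈ H ↔ y ∈ H := by
  constructor
  · intro h
    obtain ⟨m, hm⟩ := exists_pow_eq_self_of_coprime
      (Nat.Coprime.coprime_dvd_right (orderOf_dvd_card) ha : Nat.Coprime a (orderOf y))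
    exact hm ▸ pow_mem h m
  · exact fun h => pow_mem h a

private lemma ind_conj (H : Subgroup G) (g k : G) :
    indTrivChar G H (k * g * k⁻¹) = indTrivChar G H g := by
  unfold indTrivChar
  congr 1
  norm_cast
  apply Nat.card_congr
  refine Equiv.subtypeEquiv (Equiv.mulLeft k⁻¹) (fun x => ?_)
  simp [Equiv.coe_mulLeft, mul_assoc]

private lemma ind_pow (H : Subgroup G) (g : G) {a : ℕ}
    (ha : Nat.Coprime a (Fintype.card G)) :
    indTrivChar G H (g ^ a) = indTrivChar G H g := by
  unfold indTrivChar
  congr 1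
  norm_cast
  apply Nat.card_congr
  refine Equiv.subtypeEquiv (Equiv.refl G) (fun x => ?_)
  have : x⁻¹ * g ^ a * x = (x⁻¹ * g * x) ^ a := by
    have h2 : (x⁻¹ * g * x⁻¹⁻¹) ^ a = x⁻¹ * g ^ a * x⁻¹⁻¹ := conj_pow
    rw [inv_inv] at h2
    exact h2.symm
  rw [Equiv.refl_apply, this, pow_mem_iff_art H _ ha]

private lemma ind_self_pos (g : G) : 0 < indTrivChar G (Subgroup.zpowers g) g := by
  unfold indTrivChar
  apply div_pos
  · have : Nonempty {x : G // x⁻¹ * g * x ∈ Subgroup.zpowers g} :=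
      ⟨⟨1, by simpa using Subgroup.mem_zpowers g⟩⟩
    exact_mod_cast Nat.cast_pos.mpr Nat.card_pos
  · exact_mod_cast Nat.cast_pos.mpr Nat.card_pos

private lemma ind_ne_zero_exists {H : Subgroup G} {h : G}
    (hne : indTrivChar G H h ≠ 0) : ∃ x : G, x⁻¹ * h * x ∈ H := by
  by_contra hc
  push_neg at hc
  apply hne
  unfold indTrivChar
  have : IsEmpty {x : G // x⁻¹ * h * x ∈ H} := ⟨fun ⟨x, hx⟩ => hc x hx⟩
  simp [Nat.card_of_isEmpty]

private lemma ord_dvd_of_conj_mem {g h x : G} (hx : x⁻¹ * h * x ∈ Subgroup.zpowers g) :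
    orderOf h ∣ orderOf g := by
  have hordconj : orderOf (x⁻¹ * h * x) = orderOf h := by
    have := orderOf_injective (MulAut.conj x⁻¹).toMonoidHom (MulEquiv.injective _) h
    simpa using this
  obtain ⟨b, hb0⟩ := mem_powers_iff_mem_zpowers.mpr hx
  have hb : g ^ b = x⁻¹ * h * x := hb0
  rw [← hordconj, ← hb]
  exact orderOf_pow_dvd b

private lemma power_conj_exists {g h x : G} (hx : x⁻¹ * h * x ∈ Subgroup.zpowers g)
    (hord : orderOf h = orderOf g) :
    ∃ b' : ℕ, Nat.Coprime b' (Fintype.card G) ∧ x⁻¹ * h ^ b' * x = g := by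
  set y := x⁻¹ * h * x with hy
  have hordconj : orderOf y = orderOf h := by
    have := orderOf_injective (MulAut.conj x⁻¹).toMonoidHom (MulEquiv.injective _) h
    simpa using this
  have hyo : orderOf y = orderOf g := hordconj.trans hord
  have hle : Subgroup.zpowers y ≤ Subgroup.zpowers g := Subgroup.zpowers_le.mpr hx
  have hcard : Nat.card (Subgroup.zpowers g) ≤ Nat.card (Subgroup.zpowers y) := by
    rw [Nat.card_zpowers, Nat.card_zpowers, hyo]
  have heq : Subgroup.zpowers y = Subgroup.zpowers g :=
    Subgroup.eq_of_le_of_card_ge hle hcard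
  have hg : g ∈ Subgroup.zpowers y := heq ▸ Subgroup.mem_zpowers g
  obtain ⟨b, hb0⟩ := mem_powers_iff_mem_zpowers.mpr hg
  have hb : y ^ b = g := hb0
  have hypos : 0 < orderOf y := orderOf_pos y
  have hcop : Nat.Coprime b (orderOf y) := by
    have h1 : orderOf (y ^ b) = orderOf y := by rw [hb, hyo]
    rw [orderOf_pow] at h1
    rcases (Nat.div_eq_self.mp h1) with h2 | h2
    · omega
    · exact Nat.coprime_comm.mp h2
  haveI : NeZero (Fintype.card G) := ⟨Fintype.card_ne_zero⟩
  have hdvd : orderOf y ∣ Fintype.card G := orderOf_dvd_card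
  obtain ⟨U, hU⟩ := ZMod.unitsMap_surjective hdvd (ZMod.unitOfCoprime b hcop)
  refine ⟨(U : ZMod (Fintype.card G)).val, ZMod.val_coe_unit_coprime U, ?_⟩
  set b' := (U : ZMod (Fintype.card G)).val with hb'
  have h3 : ZMod.castHom hdvd (ZMod (orderOf y))
      ((U : (ZMod (Fintype.card G))ˣ) : ZMod (Fintype.card G)) = (b : ZMod (orderOf y)) := by
    have h5 := congrArg (fun u : (ZMod (orderOf y))ˣ => (u : ZMod (orderOf y))) hU
    simpa [ZMod.unitsMap_def, ZMod.coe_unitOfCoprime] using h5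
  have hmod : (b' : ZMod (orderOf y)) = (b : ZMod (orderOf y)) := by
    have h4 : ((b' : ℕ) : ZMod (Fintype.card G)) = (U : ZMod (Fintype.card G)) :=
      ZMod.natCast_rightInverse _
    calc ((b' : ℕ) : ZMod (orderOf y))
        = ZMod.castHom hdvd _ ((b' : ℕ) : ZMod (Fintype.card G)) := (map_natCast _ _).symm
      _ = ZMod.castHom hdvd _ (U : ZMod (Fintype.card G)) := by rw [h4]
      _ = (b : ZMod (orderOf y)) := h3
  have hyb : y ^ b' = y ^ b := by
    rw [pow_eq_pow_iff_modEq]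
    exact (ZMod.natCast_eq_natCast_iff _ _ _).mp hmod
  have h2 : (x⁻¹ * h * x⁻¹⁻¹) ^ b' = x⁻¹ * h ^ b' * x⁻¹⁻¹ := conj_pow
  rw [inv_inv] at h2
  rw [← h2, ← hy, hyb, hb]

/-- Any class function invariant under coprime powers takes equal values on
power-conjugate elements. -/
private lemma fn_eq_of_conj_gen {f : G → ℚ}
    (hclass : ∀ g h : G, f (h * g * h⁻¹) = f g)
    (hpow : ∀ (g : G) (a : ℕ), Nat.Coprime a (Fintype.card G) → f (g ^ a) = f g)
    {g h x : G} (hx : x⁻¹ * h * x ∈ Subgroup.zpowers g)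
    (hord : orderOf h = orderOf g) : f h = f g := by
  obtain ⟨b', hb'cop, hb'⟩ := power_conj_exists hx hord
  calc f h = f (h ^ b') := (hpow h b' hb'cop).symm
    _ = f (x⁻¹ * h ^ b' * x⁻¹⁻¹) := (hclass _ _).symm
    _ = f g := by rw [inv_inv, hb']

private lemma ind_class_pow (H : Subgroup G) :
    (∀ g h : G, indTrivChar G H (h * g * h⁻¹) = indTrivChar G H g) ∧
    (∀ (g : G) (a : ℕ), Nat.Coprime a (Fintype.card G) →
      indTrivChar G H (g ^ a) = indTrivChar G H g) :=
  ⟨fun g h => ind_conj H g h, fun g a ha => ind_pow H g ha⟩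

open Finset in
private lemma key (N : ℕ) : ∀ (χ : G → ℚ),
    (∀ g h : G, χ (h * g * h⁻¹) = χ g) →
    (∀ (g : G) (a : ℕ), Nat.Coprime a (Fintype.card G) → χ (g ^ a) = χ g) →
    (∑ g ∈ univ.filter (fun g => χ g ≠ 0), (Fintype.card G + 1) ^ orderOf g) ≤ N →
    ∃ (n : ℕ) (H : Fin n → Subgroup G) (c : Fin n → ℚ),
      (∀ i, IsCyclic (H i)) ∧
      ∀ g : G, χ g = ∑ i, c i * indTrivChar G (H i) g := by
  induction N using Nat.strong_induction_on with
  | _ N IH =>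
  classical
  intro χ hclass hpow hmu
  by_cases hz : ∀ g, χ g = 0
  · exact ⟨0, Fin.elim0, Fin.elim0, fun i => i.elim0, fun g => by simp [hz g]⟩
  push_neg at hz
  set S : Finset G := univ.filter (fun g => χ g ≠ 0) with hS
  have hSne : S.Nonempty := by
    obtain ⟨g, hg⟩ := hz
    exact ⟨g, by simp [hS, hg]⟩
  obtain ⟨g0, hg0S, hmax⟩ := S.exists_max_image orderOf hSne
  have hg0 : χ g0 ≠ 0 := by simpa [hS] using hg0S
  set m := orderOf g0 with hm
  set Z := Subgroup.zpowers g0 with hZ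
  set I : G → ℚ := indTrivChar G Z with hI
  have hIpos : 0 < I g0 := ind_self_pos g0
  set c0 : ℚ := χ g0 / I g0 with hc0
  have hc0ne : c0 ≠ 0 := div_ne_zero hg0 (ne_of_gt hIpos)
  set χ' : G → ℚ := fun h => χ h - c0 * I h with hχ'
  have hclass' : ∀ g h : G, χ' (h * g * h⁻¹) = χ' g := by
    intro g h
    simp only [hχ', hI]
    rw [hclass, ind_conj]
  have hpow' : ∀ (g : G) (a : ℕ), Nat.Coprime a (Fintype.card G) → χ' (g ^ a) = χ' g := by
    intro g a ha
    simp only [hχ', hI]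
    rw [hpow g a ha, ind_pow Z g ha]
  have hχ'g0 : χ' g0 = 0 := by
    simp only [hχ', hc0]
    field_simp
    ring
  -- support facts
  have hordle : ∀ h : G, χ' h ≠ 0 → orderOf h ≤ m := by
    intro h hh
    by_cases hch : χ h ≠ 0
    · exact hmax h (by simp [hS, hch])
    · push_neg at hch
      have hIh : I h ≠ 0 := by
        intro h0
        apply hh
        simp [hχ', hch, h0]
      obtain ⟨x, hx⟩ := ind_ne_zero_exists hIh
      exact Nat.le_of_dvd (orderOf_pos g0) (ord_dvd_of_conj_mem hx)
  have htop : ∀ h : G, orderOf h = m → χ' h ≠ 0 → (χ h ≠ 0 ∧ h ≠ g0) := by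
    intro h hhm hh
    by_cases hex : ∃ x : G, x⁻¹ * h * x ∈ Z
    · exfalso
      obtain ⟨x, hx⟩ := hex
      have h1 : χ h = χ g0 := fn_eq_of_conj_gen hclass hpow hx hhm
      have h2 : I h = I g0 :=
        fn_eq_of_conj_gen (ind_class_pow Z).1 (ind_class_pow Z).2 hx hhm
      apply hh
      simp only [hχ', h1, h2, hc0]
      field_simp
      ring
    · have hIh : I h = 0 := by
        by_contra h0
        exact hex (ind_ne_zero_exists h0)
      have hch : χ h ≠ 0 := by
        intro h0
        apply hh
        simp [hχ', h0, hIh]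
      refine ⟨hch, fun he => hh (he ▸ hχ'g0)⟩
  -- measure decreases
  set K := Fintype.card G + 1 with hK
  set S' : Finset G := univ.filter (fun g => χ' g ≠ 0) with hS'
  set T : Finset G := (S.filter (fun h => orderOf h = m)).erase g0 with hT
  have hsub : S'.filter (fun h => orderOf h = m) ⊆ T := by
    intro h hh
    simp only [hS', mem_filter, mem_univ, true_and] at hh
    obtain ⟨hh1, hh2⟩ := hh
    obtain ⟨hch, hne⟩ := htop h hh2 hh1
    simp [hT, hS, mem_erase, hne, hch, hh2]
  have hmpos : 0 < m := orderOf_pos g0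
  have hKpos : 0 < K := by omega
  have hmu' : (∑ g ∈ S', K ^ orderOf g) < ∑ g ∈ S, K ^ orderOf g := by
    have hsplit := sum_filter_add_sum_filter_not S' (fun h => orderOf h = m)
      (fun g => K ^ orderOf g)
    have hb1 : (∑ g ∈ S'.filter (fun h => orderOf h = m), K ^ orderOf g)
        ≤ T.card * K ^ m := by
      calc (∑ g ∈ S'.filter (fun h => orderOf h = m), K ^ orderOf g)
          = ∑ g ∈ S'.filter (fun h => orderOf h = m), K ^ m := by
            apply sum_congr rfl
            intro g hg
            simp only [mem_filter] at hg
            rw [hg.2]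
        _ = (S'.filter (fun h => orderOf h = m)).card * K ^ m := by
            rw [sum_const, smul_eq_mul]
        _ ≤ T.card * K ^ m := by
            exact Nat.mul_le_mul_right _ (card_le_card hsub)
    have hb2 : (∑ g ∈ S'.filter (fun h => ¬orderOf h = m), K ^ orderOf g)
        < K ^ m := by
      have hle : ∀ g ∈ S'.filter (fun h => ¬orderOf h = m),
          K ^ orderOf g ≤ K ^ (m - 1) := by
        intro g hg
        simp only [mem_filter, hS', mem_univ, true_and] at hg
        have := hordle g hg.1
        exact Nat.pow_le_pow_right (by omega) (by omega)
      calc (∑ g ∈ S'.filter (fun h => ¬orderOf h = m), K ^ orderOf g)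
          ≤ (S'.filter (fun h => ¬orderOf h = m)).card * K ^ (m - 1) := by
            simpa using sum_le_card_nsmul _ _ _ hle
        _ ≤ Fintype.card G * K ^ (m - 1) := by
            apply Nat.mul_le_mul_right
            exact le_trans (card_le_card (filter_subset _ _))
              (by simpa using card_le_univ S')
        _ < K * K ^ (m - 1) := by
            exact (Nat.mul_lt_mul_right (Nat.pow_pos hKpos)).mpr (by omega)
        _ = K ^ m := by
            rw [← pow_succ']
            congr 1
            omega
    have hlow : (T.card + 1) * K ^ m ≤ ∑ g ∈ S, K ^ orderOf g := by
      have hg0T : g0 ∈ S.filter (fun h => orderOf h = m) := by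
        simp [hS, hg0, hm]
      have hcardT : T.card + 1 = (S.filter (fun h => orderOf h = m)).card := by
        rw [hT, card_erase_of_mem hg0T]
        have : 0 < (S.filter (fun h => orderOf h = m)).card :=
          card_pos.mpr ⟨g0, hg0T⟩
        omega
      calc (T.card + 1) * K ^ m
          = ∑ g ∈ S.filter (fun h => orderOf h = m), K ^ m := by
            rw [sum_const, smul_eq_mul, hcardT]
        _ = ∑ g ∈ S.filter (fun h => orderOf h = m), K ^ orderOf g := by
            apply sum_congr rfl
            intro g hg
            simp only [mem_filter] at hg
            rw [hg.2]
        _ ≤ ∑ g ∈ S, K ^ orderOf g :=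
            sum_le_sum_of_subset (filter_subset _ _)
    have hdist : (T.card + 1) * K ^ m = T.card * K ^ m + K ^ m := by ring
    omega
  have hltN : (∑ g ∈ S', K ^ orderOf g) < N := lt_of_lt_of_le hmu' hmu
  obtain ⟨n, H, c, hcyc, hsum⟩ :=
    IH _ hltN χ' hclass' hpow' (le_refl _)
  refine ⟨n + 1, Fin.snoc H Z, Fin.snoc c c0, ?_, ?_⟩
  · intro i
    refine Fin.lastCases ?_ ?_ i
    · have h1 : (Fin.snoc H Z : Fin (n + 1) → Subgroup G) (Fin.last n) = Z :=
        Fin.snoc_last _ _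
      rw [h1, hZ]
      exact zpowers_isCyclic' g0
    · intro j
      have h1 : (Fin.snoc H Z : Fin (n + 1) → Subgroup G) j.castSucc = H j :=
        Fin.snoc_castSucc _ _ _
      rw [h1]
      exact hcyc j
  · intro g
    rw [Fin.sum_univ_castSucc]
    simp only [Fin.snoc_castSucc, Fin.snoc_last]
    have := hsum g
    simp only [hχ'] at this
    linarith [this]

end ArtinAux

/-- Let `G` be a finite group of order `d`, and `χ : G → ℚ` a class function with
`χ g = χ (g ^ a)` for all `g` and all `a` coprime to `d`. Then `χ` is a `ℚ`-linear
combination of characters `Ind_H^G 1` with `H` ranging over cyclic subgroups of `G`. -/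
theorem stmt_6 (G : Type*) [Group G] [Fintype G] (χ : G → ℚ)
    (hclass : ∀ g h : G, χ (h * g * h⁻¹) = χ g)
    (hpow : ∀ (g : G) (a : ℕ), Nat.Coprime a (Fintype.card G) → χ (g ^ a) = χ g) :
    ∃ (n : ℕ) (H : Fin n → Subgroup G) (c : Fin n → ℚ),
      (∀ i, IsCyclic (H i)) ∧
      ∀ g : G, χ g = ∑ i, c i * indTrivChar G (H i) g := by
  classical
  exact key _ χ hclass hpow (le_refl _)
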